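/- If all buyers have gross substitute valuations, then every vertex of the feasible region of the dual LP (in variables (u,p)) has integral coordinates; in particular, the set of Walrasian prices forms an integral polytope. -/

import Mathlib

open Finset

private lemma upd_sum {n : ℕ} (p : Fin n → ℝ) (x : Fin n → ℕ) (j : Fin n) (a : ℕ) :
    ∑ k, p k * ((Function.update x j a : Fin n → ℕ) k : ℝ)
      = (∑ k, p k * (x k : ℝ)) + p j * ((a : ℝ) - (x j : ℝ)) := by
  rw [← Finset.sum_erase_add _ _ (Finset.mem_univ j)]
  rw [← Finset.sum_erase_add (f := fun k => p k * (x k : ℝ)) (s := Finset.univ) (h := Finset.mem_univ j)]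
  have h1 : ∑ k ∈ Finset.univ.erase j, p k * ((Function.update x j a : Fin n → ℕ) k : ℝ)
      = ∑ k ∈ Finset.univ.erase j, p k * (x k : ℝ) :=
    Finset.sum_congr rfl fun k hk => by
      rw [Function.update_of_ne (Finset.ne_of_mem_erase hk)]
  rw [h1, Function.update_self]
  ring

private lemma upd_sum_add {n : ℕ} (p : Fin n → ℝ) (x : Fin n → ℕ) (j : Fin n) :
    ∑ k, p k * ((Function.update x j (x j + 1) : Fin n → ℕ) k : ℝ)
      = (∑ k, p k * (x k : ℝ)) + p j := by
  rw [upd_sum]; push_cast; ring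

private lemma upd_sum_sub {n : ℕ} (p : Fin n → ℝ) (x : Fin n → ℕ) (k : Fin n) (hk : 0 < x k) :
    ∑ j, p j * ((Function.update x k (x k - 1) : Fin n → ℕ) j : ℝ)
      = (∑ j, p j * (x j : ℝ)) - p k := by
  rw [upd_sum, Nat.cast_sub hk]; push_cast; ring

private lemma upd_sum_swap {n : ℕ} (p : Fin n → ℝ) (x : Fin n → ℕ) (j k : Fin n) (hjk : j ≠ k)
    (hk : 0 < x k) :
    ∑ l, p l * ((Function.update (Function.update x j (x j + 1)) k (x k - 1) : Fin n → ℕ) l : ℝ)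
      = (∑ l, p l * (x l : ℝ)) + p j - p k := by
  have hxk : (Function.update x j (x j + 1) : Fin n → ℕ) k = x k :=
    Function.update_of_ne (Ne.symm hjk) _ _
  have e : Function.update (Function.update x j (x j + 1)) k (x k - 1)
      = Function.update (Function.update x j (x j + 1)) k
          ((Function.update x j (x j + 1) : Fin n → ℕ) k - 1) := by rw [hxk]
  rw [e, upd_sum_sub _ _ _ (by rw [hxk]; exact hk), upd_sum_add]

private lemma slack_lower (A : ℤ) (r : ℝ) (h : (A : ℝ) ≤ r) : (A : ℝ) ≤ r - Int.fract r := by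
  have h1 : A ≤ ⌊r⌋ := Int.le_floor.mpr h
  have h2 : (A : ℝ) ≤ (⌊r⌋ : ℝ) := by exact_mod_cast h1
  rw [Int.self_sub_fract]; exact h2

private lemma slack_upper (A : ℤ) (r : ℝ) (h : r ≤ (A : ℝ)) (hf : Int.fract r ≠ 0) :
    r + (1 - Int.fract r) ≤ (A : ℝ) := by
  have h1 : ⌈r⌉ ≤ A := Int.ceil_le.mpr h
  have h2 : (⌈r⌉ : ℝ) = r + 1 - Int.fract r := Int.ceil_eq_add_one_sub_fract hf
  have h3 : (⌈r⌉ : ℝ) ≤ (A : ℝ) := by exact_mod_cast h1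
  rw [h2] at h3; linarith

private lemma exists_max {n : ℕ} (s : Fin n → ℕ) (f : (Fin n → ℕ) → ℝ) :
    ∃ x : Fin n → ℕ, (∀ j, x j ≤ s j) ∧ ∀ y, (∀ j, y j ≤ s j) → f y ≤ f x := by
  obtain ⟨b, -, hb⟩ := Finset.exists_max_image (Finset.univ : Finset (∀ j, Fin (s j + 1)))
    (fun b => f (fun j => (b j : ℕ))) Finset.univ_nonempty
  refine ⟨fun j => (b j : ℕ), fun j => Nat.lt_succ_iff.mp (b j).isLt, fun y hy => ?_⟩
  simpa using hb (fun j => (⟨y j, Nat.lt_succ_of_le (hy j)⟩ : Fin (s j + 1))) (Finset.mem_univ _)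

private lemma exists_max_tuple {m n : ℕ} (s : Fin n → ℕ) (g : (Fin m → Fin n → ℕ) → ℤ) :
    ∃ x : Fin m → Fin n → ℕ, (∀ i j, x i j ≤ s j) ∧ ∀ y, (∀ i j, y i j ≤ s j) → g y ≤ g x := by
  obtain ⟨b, -, hb⟩ := Finset.exists_max_image (Finset.univ : Finset (Fin m → ∀ j, Fin (s j + 1)))
    (fun b => g (fun i j => (b i j : ℕ))) Finset.univ_nonempty
  refine ⟨fun i j => (b i j : ℕ), fun i j => Nat.lt_succ_iff.mp (b i j).isLt, fun y hy => ?_⟩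
  simpa using hb (fun i j => (⟨y i j, Nat.lt_succ_of_le (hy i j)⟩ : Fin (s j + 1)))
    (Finset.mem_univ _)

/-- If all buyers have (multi-unit) gross substitute valuations — formalized via discrete
concavity: local optimality under single-unit additions, removals and swaps implies
global optimality of a demanded bundle — then every extreme point `(u, p)` of the
feasible region of the dual LP has integral coordinates; in particular the set of
Walrasian prices forms an integral polytope. -/
theorem gs_dual_LP_vertices_integral
    (m n : ℕ) (s : Fin n → ℕ)
    (v : Fin m → (Fin n → ℕ) → ℤ)
    (hDC : ∀ (i : Fin m) (p : Fin n → ℝ) (x : Fin n → ℕ), (∀ j, x j ≤ s j) →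
      (∀ j, x j < s j →
        (v i (Function.update x j (x j + 1)) : ℝ) - p j ≤ (v i x : ℝ)) →
      (∀ k, 0 < x k →
        (v i (Function.update x k (x k - 1)) : ℝ) + p k ≤ (v i x : ℝ)) →
      (∀ j k, j ≠ k → x j < s j → 0 < x k →
        (v i (Function.update (Function.update x j (x j + 1)) k (x k - 1)) : ℝ)
          - p j + p k ≤ (v i x : ℝ)) →
      ∀ y : Fin n → ℕ, (∀ j, y j ≤ s j) →
        (v i y : ℝ) - ∑ j, p j * (y j : ℝ) ≤ (v i x : ℝ) - ∑ j, p j * (x j : ℝ)) :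
    let Feas : Set (ℝ × (Fin n → ℝ)) := {q | ∀ x : Fin m → Fin n → ℕ,
      (∀ i j, x i j ≤ s j) →
      ∑ i, ((v i (x i) : ℝ) - ∑ j, q.2 j * (x i j : ℝ)) ≤ q.1}
    ∀ q ∈ Feas.extremePoints ℝ, (∃ z : ℤ, q.1 = (z : ℝ)) ∧ ∀ j, ∃ z : ℤ, q.2 j = (z : ℝ) := by
  intro Feas q hq
  classical
  obtain ⟨u, p⟩ := q
  obtain ⟨hqF, hqExt⟩ := hq
  have hqF' : ∀ x : Fin m → Fin n → ℕ, (∀ i j, x i j ≤ s j) →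
      ∑ i, ((v i (x i) : ℝ) - ∑ j, p j * (x i j : ℝ)) ≤ u := hqF
  -- Step 1: all prices are integral
  have hpint : ∀ j, ∃ z : ℤ, p j = (z : ℝ) := by
    by_contra hbad
    push_neg at hbad
    obtain ⟨j₀, hj₀⟩ := hbad
    set d : Fin n → ℝ := fun j => if ∃ z : ℤ, p j = (z : ℝ) then 0 else 1 with hd
    set εf : Fin n → ℝ := fun j => if ∃ z : ℤ, p j = (z : ℝ) then 1
      else min (Int.fract (p j)) (1 - Int.fract (p j)) with hεf
    have hne_univ : (Finset.univ : Finset (Fin n)).Nonempty := ⟨j₀, Finset.mem_univ j₀⟩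
    set ε : ℝ := Finset.univ.inf' hne_univ εf with hεdef
    have hεfpos : ∀ j, 0 < εf j := by
      intro j
      by_cases h : ∃ z : ℤ, p j = (z : ℝ)
      · simp only [hεf, if_pos h]; norm_num
      · simp only [hεf, if_neg h]
        have h1 : 0 < Int.fract (p j) :=
          Int.fract_pos.mpr fun c => h ⟨⌊p j⌋, c⟩
        have h2 : Int.fract (p j) < 1 := Int.fract_lt_one _
        exact lt_min h1 (by linarith)
    have hε : 0 < ε := by
      rw [hεdef, Finset.lt_inf'_iff]
      exact fun j _ => hεfpos j
    have hεle : ∀ j, ε ≤ εf j := fun j => Finset.inf'_le _ (Finset.mem_univ j)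
    -- choose demanded bundles at p
    have hex : ∀ i : Fin m, ∃ x : Fin n → ℕ, (∀ j, x j ≤ s j) ∧ ∀ y, (∀ j, y j ≤ s j) →
        ((v i y : ℝ) - ∑ j, p j * (y j : ℝ)) ≤ ((v i x : ℝ) - ∑ j, p j * (x j : ℝ)) :=
      fun i => exists_max s (fun y => (v i y : ℝ) - ∑ j, p j * (y j : ℝ))
    choose x hxs hxm using hex
    -- base local inequalities at p
    have hadd : ∀ i j, x i j < s j →
        ((v i (Function.update (x i) j (x i j + 1)) - v i (x i) : ℤ) : ℝ) ≤ p j := by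
      intro i j hj
      have hyb : ∀ k, Function.update (x i) j (x i j + 1) k ≤ s k := by
        intro k
        rcases eq_or_ne k j with rfl | hk
        · rw [Function.update_self]; omega
        · rw [Function.update_of_ne hk]; exact hxs i k
      have h := hxm i _ hyb
      rw [upd_sum_add] at h
      push_cast
      linarith
    have hrem : ∀ i k, 0 < x i k →
        p k ≤ ((v i (x i) - v i (Function.update (x i) k (x i k - 1)) : ℤ) : ℝ) := by
      intro i k hk
      have hyb : ∀ l, Function.update (x i) k (x i k - 1) l ≤ s l := by
        intro l
        rcases eq_or_ne l k with rfl | hl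
        · rw [Function.update_self]; have := hxs i l; omega
        · rw [Function.update_of_ne hl]; exact hxs i l
      have h := hxm i _ hyb
      rw [upd_sum_sub _ _ _ hk] at h
      push_cast
      linarith
    have hswap : ∀ i j k, j ≠ k → x i j < s j → 0 < x i k →
        ((v i (Function.update (Function.update (x i) j (x i j + 1)) k (x i k - 1))
          - v i (x i) : ℤ) : ℝ) ≤ p j - p k := by
      intro i j k hjk hj hk
      have hyb : ∀ l, Function.update (Function.update (x i) j (x i j + 1)) k (x i k - 1) l ≤ s l := by
        intro l
        rcases eq_or_ne l k with rfl | hlk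
        · rw [Function.update_self]; have := hxs i l; omega
        · rw [Function.update_of_ne hlk]
          rcases eq_or_ne l j with rfl | hlj
          · rw [Function.update_self]; omega
          · rw [Function.update_of_ne hlj]; exact hxs i l
      have h := hxm i _ hyb
      rw [upd_sum_swap _ _ _ _ hjk hk] at h
      push_cast
      linarith
    set S : ℝ := ∑ i, ∑ j, d j * (x i j : ℝ) with hS
    -- the key perturbation feasibility
    have key : ∀ t : ℝ, -ε ≤ t → t ≤ ε →
        ((u - t * S, fun j => p j + t * d j) : ℝ × (Fin n → ℝ)) ∈ Feas := by
      intro t ht1 ht2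
      have hdint : ∀ j (h : ∃ z : ℤ, p j = (z : ℝ)), d j = 0 := by
        intro j h; simp only [hd, if_pos h]
      have hdfrac : ∀ j (h : ¬∃ z : ℤ, p j = (z : ℝ)), d j = 1 := by
        intro j h; simp only [hd, if_neg h]
      have hεffrac : ∀ j (h : ¬∃ z : ℤ, p j = (z : ℝ)),
          εf j = min (Int.fract (p j)) (1 - Int.fract (p j)) := by
        intro j h; simp only [hεf, if_neg h]
      have hfr0 : ∀ j (h : ¬∃ z : ℤ, p j = (z : ℝ)), 0 < Int.fract (p j) := by
        intro j h; exact Int.fract_pos.mpr fun c => h ⟨⌊p j⌋, c⟩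
      have hlow : ∀ (A : ℤ) (j : Fin n), (A : ℝ) ≤ p j → (A : ℝ) ≤ p j + t * d j := by
        intro A j hA
        by_cases h : ∃ z : ℤ, p j = (z : ℝ)
        · rw [hdint j h]; linarith
        · rw [hdfrac j h]
          have h1 := slack_lower A (p j) hA
          have h2 := hεle j
          rw [hεffrac j h] at h2
          have h3 := min_le_left (Int.fract (p j)) (1 - Int.fract (p j))
          linarith
      have hhigh : ∀ (A : ℤ) (k : Fin n), p k ≤ (A : ℝ) → p k + t * d k ≤ (A : ℝ) := by
        intro A k hA
        by_cases h : ∃ z : ℤ, p k = (z : ℝ)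
        · rw [hdint k h]; linarith
        · rw [hdfrac k h]
          have h1 := slack_upper A (p k) hA (ne_of_gt (hfr0 k h))
          have h2 := hεle k
          rw [hεffrac k h] at h2
          have h3 := min_le_right (Int.fract (p k)) (1 - Int.fract (p k))
          linarith
      have hdiff : ∀ (A : ℤ) (j k : Fin n), (A : ℝ) ≤ p j - p k →
          (A : ℝ) ≤ (p j + t * d j) - (p k + t * d k) := by
        intro A j k hA
        by_cases h1 : ∃ z : ℤ, p j = (z : ℝ)
        · by_cases h2 : ∃ z : ℤ, p k = (z : ℝ)
          · rw [hdint j h1, hdint k h2]; linarith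
          · obtain ⟨zj, hzj⟩ := h1
            rw [hdint j ⟨zj, hzj⟩, hdfrac k h2]
            have hk' : p k ≤ ((zj - A : ℤ) : ℝ) := by push_cast; linarith [hzj ▸ hA]
            have h3 := slack_upper (zj - A) (p k) (by push_cast; push_cast at hk'; linarith)
              (ne_of_gt (hfr0 k h2))
            push_cast at h3
            have h4 := hεle k
            rw [hεffrac k h2] at h4
            have h5 := min_le_right (Int.fract (p k)) (1 - Int.fract (p k))
            rw [hzj]
            linarith
        · by_cases h2 : ∃ z : ℤ, p k = (z : ℝ)
          · obtain ⟨zk, hzk⟩ := h2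
            rw [hdfrac j h1, hdint k ⟨zk, hzk⟩]
            have hj' : ((A + zk : ℤ) : ℝ) ≤ p j := by push_cast; rw [hzk] at hA; linarith
            have h3 := slack_lower (A + zk) (p j) hj'
            push_cast at h3
            have h4 := hεle j
            rw [hεffrac j h1] at h4
            have h5 := min_le_left (Int.fract (p j)) (1 - Int.fract (p j))
            rw [hzk]
            linarith
          · rw [hdfrac j h1, hdfrac k h2]; linarith
      -- global optimality at perturbed prices
      have hglob : ∀ i, ∀ y : Fin n → ℕ, (∀ j, y j ≤ s j) →
          (v i y : ℝ) - ∑ j, (p j + t * d j) * (y j : ℝ)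
            ≤ (v i (x i) : ℝ) - ∑ j, (p j + t * d j) * (x i j : ℝ) := by
        intro i
        refine hDC i (fun j => p j + t * d j) (x i) (hxs i) ?_ ?_ ?_
        · intro j hj
          have h := hlow _ j (hadd i j hj)
          push_cast at h
          beta_reduce
          linarith
        · intro k hk
          have h := hhigh _ k (hrem i k hk)
          push_cast at h
          beta_reduce
          linarith
        · intro j k hjk hj hk
          have h := hdiff _ j k (hswap i j k hjk hj hk)
          push_cast at h
          beta_reduce
          linarith
      intro y hy
      calc ∑ i, ((v i (y i) : ℝ) - ∑ j, (p j + t * d j) * (y i j : ℝ))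
          ≤ ∑ i, ((v i (x i) : ℝ) - ∑ j, (p j + t * d j) * (x i j : ℝ)) :=
            Finset.sum_le_sum fun i _ => hglob i (y i) (hy i)
        _ = ∑ i, ((v i (x i) : ℝ) - ∑ j, p j * (x i j : ℝ)) - t * S := by
            rw [hS, Finset.mul_sum, ← Finset.sum_sub_distrib]
            refine Finset.sum_congr rfl fun i _ => ?_
            rw [Finset.mul_sum]
            have e : ∑ j, (p j + t * d j) * (x i j : ℝ)
                = ∑ j, (p j * (x i j : ℝ) + t * (d j * (x i j : ℝ))) := by
              refine Finset.sum_congr rfl fun j _ => by ring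
            rw [e, Finset.sum_add_distrib]
            ring
        _ ≤ u - t * S := by
            have := hqF' x hxs
            linarith
    -- derive the contradiction with extremality
    have hseg : ((u, p) : ℝ × (Fin n → ℝ)) ∈ openSegment ℝ
        ((u - ε * S, fun j => p j + ε * d j) : ℝ × (Fin n → ℝ))
        ((u - (-ε) * S, fun j => p j + (-ε) * d j) : ℝ × (Fin n → ℝ)) := by
      refine ⟨1/2, 1/2, by norm_num, by norm_num, by norm_num, ?_⟩
      refine Prod.ext ?_ ?_
      · show (1/2 : ℝ) * (u - ε * S) + (1/2 : ℝ) * (u - (-ε) * S) = u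
        ring
      · funext j
        show (1/2 : ℝ) * (p j + ε * d j) + (1/2 : ℝ) * (p j + (-ε) * d j) = p j
        ring
    have h12 := hqExt (key ε (by linarith) le_rfl) (key (-ε) le_rfl (by linarith)) hseg
    have h2 := congrFun (congrArg Prod.snd h12) j₀
    have hd1 : d j₀ = 1 := by simp only [hd]; exact if_neg (by push_neg; exact hj₀)
    simp only [hd1] at h2
    have : p j₀ + ε * 1 = p j₀ := h2
    linarith
  -- Step 2: u is integral
  choose z hz using hpint
  obtain ⟨xt, hxts, hxtm⟩ := exists_max_tuple s
    (fun y : Fin m → Fin n → ℕ => ∑ i, (v i (y i) - ∑ j, z j * (y i j : ℤ)))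
  set G : ℤ := ∑ i, (v i (xt i) - ∑ j, z j * (xt i j : ℤ)) with hG
  have cast_eq : ∀ y : Fin m → Fin n → ℕ,
      ∑ i, ((v i (y i) : ℝ) - ∑ j, p j * (y i j : ℝ))
        = ((∑ i, (v i (y i) - ∑ j, z j * (y i j : ℤ)) : ℤ) : ℝ) := by
    intro y
    push_cast
    refine Finset.sum_congr rfl fun i _ => ?_
    congr 1
    exact Finset.sum_congr rfl fun j _ => by rw [hz j]
  have hle1 : (G : ℝ) ≤ u := by
    have h := hqF' xt hxts
    rw [cast_eq xt] at h
    exact h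
  have hle2 : u ≤ (G : ℝ) := by
    by_contra hlt
    push_neg at hlt
    have hQ2 : ((G : ℝ), p) ∈ Feas := by
      intro y hy
      show ∑ i, ((v i (y i) : ℝ) - ∑ j, p j * (y i j : ℝ)) ≤ (G : ℝ)
      rw [cast_eq y]
      exact_mod_cast hxtm y hy
    have hQ1 : ((2 * u - (G : ℝ), p) : ℝ × (Fin n → ℝ)) ∈ Feas := by
      intro y hy
      have h := hqF' y hy
      show ∑ i, ((v i (y i) : ℝ) - ∑ j, p j * (y i j : ℝ)) ≤ 2 * u - (G : ℝ)
      linarith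
    have hseg : ((u, p) : ℝ × (Fin n → ℝ)) ∈ openSegment ℝ
        ((2 * u - (G : ℝ), p) : ℝ × (Fin n → ℝ)) (((G : ℝ), p) : ℝ × (Fin n → ℝ)) := by
      refine ⟨1/2, 1/2, by norm_num, by norm_num, by norm_num, ?_⟩
      refine Prod.ext ?_ ?_
      · show (1/2 : ℝ) * (2 * u - (G : ℝ)) + (1/2 : ℝ) * (G : ℝ) = u
        ring
      · funext j
        show (1/2 : ℝ) * p j + (1/2 : ℝ) * p j = p j
        ring
    have h12 := hqExt hQ1 hQ2 hseg
    have := congrArg Prod.fst h12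
    simp only at this
    linarith [this]
  exact ⟨⟨G, le_antisymm hle2 hle1⟩, fun j => ⟨z j, hz j⟩⟩
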